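/- arXiv:2402.07048 — 3 statements merged into one kernel-verified Lean document; each statement's English description precedes it below -/
import Mathlib

section
/- Let a, b, a', b' > 0 be real numbers with a' + b' = a + b. For λ > 0, define the Pólya density π_PO(λ; a, b) = Σ_{k=0}^∞ (-1)^k [Γ(a+b+k)/(Γ(a+b)·k!)] · (k + (a+b)/2) · (1/B(a,b)) · exp(−(k+a)(k+b)λ/2). Then for every λ > 0, π_PO(λ; a', b') = [B(a,b)/B(a',b')] · exp(λ(ab − a'b')/2) · π_PO(λ; a, b). -/
open Real

/-- The beta function `B(a,b) = Γ(a)Γ(b)/Γ(a+b)`. -/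
noncomputable def betaFn (a b : ℝ) : ℝ := Real.Gamma a * Real.Gamma b / Real.Gamma (a + b)

/-- The Pólya density with shape parameters `a, b`, as a pointwise series in `λ`. -/
noncomputable def polyaDensity (a b l : ℝ) : ℝ :=
  ∑' k : ℕ, (-1 : ℝ) ^ k * (Real.Gamma (a + b + k) / (Real.Gamma (a + b) * k.factorial)) *
    ((k : ℝ) + (a + b) / 2) * (1 / betaFn a b) * Real.exp (-((k : ℝ) + a) * ((k : ℝ) + b) * l / 2)

lemma betaFn_pos {a b : ℝ} (ha : 0 < a) (hb : 0 < b) : 0 < betaFn a b := by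
  unfold betaFn
  exact div_pos (mul_pos (Real.Gamma_pos_of_pos ha) (Real.Gamma_pos_of_pos hb))
    (Real.Gamma_pos_of_pos (by linarith))

/-- Proposition 2.1: the Pólya density identity along parameter pairs with fixed sum. -/
theorem polyaDensity_identity (a b a' b' : ℝ) (ha : 0 < a) (hb : 0 < b)
    (ha' : 0 < a') (hb' : 0 < b') (hsum : a' + b' = a + b) :
    ∀ l : ℝ, 0 < l →
      polyaDensity a' b' l =
        (betaFn a b / betaFn a' b') * Real.exp (l * (a * b - a' * b') / 2) *
          polyaDensity a b l := by
  intro l hl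
  unfold polyaDensity
  rw [hsum, ← tsum_mul_left]
  refine tsum_congr fun k => ?_
  have hB : betaFn a b ≠ 0 := (betaFn_pos ha hb).ne'
  have hexp : Real.exp (-((k : ℝ) + a') * ((k : ℝ) + b') * l / 2)
      = Real.exp (l * (a * b - a' * b') / 2) *
        Real.exp (-((k : ℝ) + a) * ((k : ℝ) + b) * l / 2) := by
    rw [← Real.exp_add]
    congr 1
    linear_combination (-(l * (k:ℝ)) / 2) * hsum
  have hBB : betaFn a b / betaFn a' b' * (1 / betaFn a b) = 1 / betaFn a' b' := by
    rw [div_mul_div_comm, mul_one, ← div_div, div_right_comm, div_self hB]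
  rw [hexp, ← hBB]
  ring
end

section
/- Let a, b > 0 with a ≠ b. Then the series Σ_{k=0}^∞ 1/((k+a)²(k+b)²) converges and equals (1/(a−b)²) · [ ψ'(a) + ψ'(b) − (2/(a−b)) (ψ(a) − ψ(b)) ]. Consequently the Pólya distribution with parameters (a,b), defined as the law of Σ_{k=0}^∞ 2ε_k/((k+a)(k+b)) for independent standard exponential random variables ε_k, has variance (4/(a−b)²) [ψ'(a) + ψ'(b) − (2/(a−b))(ψ(a) − ψ(b))]. -/
open Real MeasureTheory ProbabilityTheory Filter Topology
open scoped NNReal ENNReal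

/-- The digamma function `ψ = (log Γ)'` on `(0,∞)`. -/
noncomputable def digamma (x : ℝ) : ℝ := deriv (fun y => Real.log (Real.Gamma y)) x

/-- The trigamma function `ψ' = (log Γ)''` on `(0,∞)`. -/
noncomputable def trigamma (x : ℝ) : ℝ := deriv digamma x


namespace PolyaAux

/-- term of the digamma series -/
noncomputable def t (m : ℕ) (x : ℝ) : ℝ := 1/((m:ℝ)+1) - 1/(x+m)

noncomputable def psiAux (x : ℝ) : ℝ := -Real.eulerMascheroniConstant + ∑' m : ℕ, t m x

noncomputable def dgSeq (n : ℕ) (x : ℝ) : ℝ := Real.log n - ∑ m ∈ Finset.range (n+1), 1/(x+(m:ℝ))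

noncomputable def tgSeq (n : ℕ) (x : ℝ) : ℝ := ∑ m ∈ Finset.range (n+1), 1/(x+(m:ℝ))^2

lemma min_mul_le {l : ℝ} (hl : 0 < l) (m : ℕ) : min 1 l * ((m:ℝ)+1) ≤ (m:ℝ) + l := by
  have h1 : min 1 l ≤ 1 := min_le_left _ _
  have h2 : min 1 l ≤ l := min_le_right _ _
  have h3 : (0:ℝ) ≤ m := Nat.cast_nonneg m
  nlinarith

lemma pos_add {l : ℝ} (hl : 0 < l) (m : ℕ) : 0 < (m:ℝ) + l := by positivity

lemma summable_sq : Summable (fun m : ℕ => 1/(((m:ℝ)+1)^2)) := by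
  have := (summable_nat_add_iff (f := fun n : ℕ => 1/((n:ℝ))^2) 1).2
    (summable_one_div_nat_pow.2 one_lt_two)
  simpa using this

lemma one_div_add_le {l : ℝ} (hl : 0 < l) (m : ℕ) :
    1/((m:ℝ)+l) ≤ (1/min 1 l) * (1/((m:ℝ)+1)) := by
  have hmin : 0 < min 1 l := lt_min one_pos hl
  rw [div_mul_div_comm, one_mul]
  exact one_div_le_one_div_of_le (by positivity) (min_mul_le hl m)

lemma summable_shift_sq {l : ℝ} (hl : 0 < l) : Summable (fun m : ℕ => 1/(((m:ℝ)+l)^2)) := by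
  have hmin : 0 < min 1 l := lt_min one_pos hl
  refine Summable.of_nonneg_of_le (fun m => by positivity) (fun m => ?_)
    (summable_sq.mul_left ((1/min 1 l)^2))
  have h := one_div_add_le hl m
  have h0 : 0 ≤ 1/((m:ℝ)+l) := by positivity
  calc 1/(((m:ℝ)+l)^2) = (1/((m:ℝ)+l))^2 := by rw [div_pow, one_pow]
    _ ≤ ((1/min 1 l) * (1/((m:ℝ)+1)))^2 := by apply pow_le_pow_left₀ h0 h
    _ = (1/min 1 l)^2 * (1/(((m:ℝ)+1)^2)) := by rw [mul_pow]; congr 1; rw [div_pow, one_pow]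

lemma t_eq (m : ℕ) {x : ℝ} (hx : 0 < x) :
    t m x = (x-1) / (((m:ℝ)+1) * (x+(m:ℝ))) := by
  have h1 : ((m:ℝ)+1) ≠ 0 := by positivity
  have h2 : (x+(m:ℝ)) ≠ 0 := by positivity
  simp only [t]
  field_simp
  ring

lemma abs_t_le {l u : ℝ} (hl : 0 < l) {x : ℝ} (hx : x ∈ Set.Icc l u) (m : ℕ) :
    ‖t m x‖ ≤ (|u|+1) * (1/min 1 l) * (1/(((m:ℝ)+1)^2)) := by
  have hxpos : 0 < x := lt_of_lt_of_le hl hx.1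
  have h1 : (0:ℝ) < (m:ℝ)+1 := by positivity
  have h2 : (0:ℝ) < x+(m:ℝ) := by positivity
  have hxl : (m:ℝ) + l ≤ x + m := by linarith [hx.1]
  rw [t_eq m hxpos, Real.norm_eq_abs, abs_div, abs_mul, abs_of_pos h1, abs_of_pos h2]
  have hnum : |x - 1| ≤ |u| + 1 := by
    have := abs_sub_abs_le_abs_sub x 1
    have hxu : |x| ≤ |u| := by
      rw [abs_of_pos hxpos]
      exact le_trans hx.2 (le_abs_self u)
    calc |x - 1| ≤ |x| + |1| := abs_sub x 1
      _ ≤ |u| + 1 := by simp [hxu]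
  have hmin : 0 < min 1 l := lt_min one_pos hl
  have hd : min 1 l * ((m:ℝ)+1) ≤ x + (m:ℝ) := le_trans (min_mul_le hl m) hxl
  calc |x-1| / (((m:ℝ)+1) * (x+(m:ℝ)))
      ≤ (|u|+1) / (((m:ℝ)+1) * (min 1 l * ((m:ℝ)+1))) := by
        apply div_le_div₀ (by positivity) hnum (by positivity)
        exact mul_le_mul_of_nonneg_left hd h1.le
    _ = (|u|+1) * (1/min 1 l) * (1/(((m:ℝ)+1)^2)) := by
        have hmin' : min 1 l ≠ 0 := ne_of_gt hmin
        have h1' : ((m:ℝ)+1) ≠ 0 := ne_of_gt h1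
        rw [div_eq_iff (by positivity)]
        field_simp

lemma summable_t {x : ℝ} (hx : 0 < x) : Summable (fun m : ℕ => t m x) := by
  refine Summable.of_norm (Summable.of_nonneg_of_le (fun m => norm_nonneg _)
    (fun m => abs_t_le hx (Set.mem_Icc.2 ⟨le_refl x, le_refl x⟩) m) ?_)
  exact (summable_sq.mul_left _)

/-- constant sequences converge uniformly -/
lemma tendstoUniformlyOn_const_seq {a : ℕ → ℝ} {L : ℝ} (h : Tendsto a atTop (𝓝 L))
    (s : Set ℝ) : TendstoUniformlyOn (fun n (_ : ℝ) => a n) (fun _ => L) atTop s := by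
  rw [Metric.tendstoUniformlyOn_iff]
  intro ε hε
  filter_upwards [Metric.tendsto_nhds.mp h ε hε] with n hn x _
  rw [dist_comm]
  exact hn

lemma tendstoUniformlyOn_shift {F : ℕ → ℝ → ℝ} {g : ℝ → ℝ} {s : Set ℝ}
    (h : TendstoUniformlyOn F g atTop s) :
    TendstoUniformlyOn (fun n => F (n+1)) g atTop s := by
  intro u hu
  rcases eventually_atTop.mp (h u hu) with ⟨N, hN⟩
  exact eventually_atTop.mpr ⟨N, fun n hn => hN (n+1) (le_trans hn (Nat.le_succ n))⟩

lemma hasDerivAt_logGammaSeq {x : ℝ} (hx : 0 < x) (n : ℕ) :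
    HasDerivAt (fun y => Real.BohrMollerup.logGammaSeq y n) (dgSeq n x) x := by
  have : ∀ m ∈ Finset.range (n+1), HasDerivAt (fun y => Real.log (y + (m:ℝ))) (1/(x+(m:ℝ))) x := by
    intro m _
    have h1 : HasDerivAt (fun y : ℝ => y + (m:ℝ)) 1 x := (hasDerivAt_id x).add_const _
    have h2 := h1.log (by positivity)
    simpa [one_div] using h2
  have hsum : HasDerivAt (fun y => ∑ m ∈ Finset.range (n+1), Real.log (y + (m:ℝ)))
      (∑ m ∈ Finset.range (n+1), 1/(x+(m:ℝ))) x := HasDerivAt.fun_sum this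
  have h3 : HasDerivAt (fun y : ℝ => y * Real.log n + Real.log (Nat.factorial n)) (Real.log n) x := by
    simpa using ((hasDerivAt_id x).mul_const (Real.log n)).add_const (Real.log (Nat.factorial n : ℕ))
  have := h3.fun_sub hsum
  simpa [Real.BohrMollerup.logGammaSeq, dgSeq, sub_eq_add_neg, add_assoc] using this

lemma hasDerivAt_dgSeq {x : ℝ} (hx : 0 < x) (n : ℕ) :
    HasDerivAt (dgSeq n) (tgSeq n x) x := by
  have : ∀ m ∈ Finset.range (n+1), HasDerivAt (fun y => 1/(y + (m:ℝ))) (-(1/(x+(m:ℝ))^2)) x := by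
    intro m _
    have h1 : HasDerivAt (fun y : ℝ => y + (m:ℝ)) 1 x := (hasDerivAt_id x).add_const _
    have h2 := h1.fun_inv (by positivity)
    simpa [one_div, neg_div] using h2
  have hsum := HasDerivAt.fun_sum this
  have h5 := (hasDerivAt_const x (Real.log (n:ℝ))).fun_sub hsum
  have h4 : HasDerivAt (fun y => Real.log (n:ℝ) - ∑ m ∈ Finset.range (n+1), 1/(y+(m:ℝ)))
      (tgSeq n x) x := by
    simpa [tgSeq, one_div, Finset.sum_neg_distrib] using h5
  exact h4

lemma harmonic_cast (n : ℕ) : ((harmonic n : ℚ) : ℝ) = ∑ m ∈ Finset.range n, 1/((m:ℝ)+1) := by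
  rw [harmonic]
  push_cast
  simp [one_div]

lemma dgSeq_decomp (n : ℕ) (x : ℝ) :
    dgSeq n x = (Real.log n - ((harmonic n : ℚ) : ℝ)) + (∑ m ∈ Finset.range n, t m x)
      + (-(1/(x+(n:ℝ)))) := by
  rw [dgSeq, harmonic_cast, Finset.sum_range_succ]
  simp only [t]
  rw [Finset.sum_sub_distrib]
  ring

lemma tendstoUniformlyOn_dgSeq {l u : ℝ} (hl : 0 < l) :
    TendstoUniformlyOn dgSeq psiAux atTop (Set.Icc l u) := by
  have hA : TendstoUniformlyOn (fun (n : ℕ) (_ : ℝ) => Real.log (n:ℝ) - ((harmonic n : ℚ) : ℝ))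
      (fun _ => -Real.eulerMascheroniConstant) atTop (Set.Icc l u) := by
    apply tendstoUniformlyOn_const_seq
    have := (Real.tendsto_harmonic_sub_log).neg
    simpa [neg_sub] using this
  have hB : TendstoUniformlyOn (fun n x => ∑ m ∈ Finset.range n, t m x)
      (fun x => ∑' m, t m x) atTop (Set.Icc l u) := by
    apply tendstoUniformlyOn_tsum_nat (summable_sq.mul_left ((|u|+1) * (1/min 1 l)))
    intro m x hx
    exact abs_t_le hl hx m
  have hC : TendstoUniformlyOn (fun (n : ℕ) (x : ℝ) => -(1/(x+(n:ℝ)))) (fun _ => 0) atTop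
      (Set.Icc l u) := by
    rw [Metric.tendstoUniformlyOn_iff]
    intro ε hε
    obtain ⟨N, hN⟩ := exists_nat_gt (1/ε)
    filter_upwards [eventually_ge_atTop (N+1)] with n hn x hx
    have hxpos : 0 < x := lt_of_lt_of_le hl hx.1
    have hnpos : (0:ℝ) < n := by
      have : (1:ℕ) ≤ n := le_trans (Nat.le_add_left 1 N) hn
      exact_mod_cast Nat.lt_of_lt_of_le Nat.zero_lt_one this
    have h1 : 1/ε < (n:ℝ) := lt_of_lt_of_le hN (by exact_mod_cast Nat.le_of_succ_le hn)
    rw [dist_eq_norm]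
    have h2 : 0 < x + (n:ℝ) := by positivity
    have h3 : 1/(x+(n:ℝ)) ≤ 1/(n:ℝ) := one_div_le_one_div_of_le hnpos (by linarith)
    have h4 : 1/(n:ℝ) < ε := by
      rw [div_lt_iff₀ hnpos]
      rw [div_lt_iff₀ hε] at h1
      linarith
    have h5 : 0 < 1/(x+(n:ℝ)) := by positivity
    simp only [zero_sub, norm_neg, neg_neg, Real.norm_eq_abs, abs_of_pos h5]
    linarith
  have H := ((hA.add hB).add hC).congr
    (Filter.Eventually.of_forall (fun n x hx => (dgSeq_decomp n x).symm))
  exact H.congr_right (fun x hx => by simp [psiAux])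

lemma tlu_dgSeq : TendstoLocallyUniformlyOn dgSeq psiAux atTop (Set.Ioi (0:ℝ)) := by
  rw [tendstoLocallyUniformlyOn_iff_forall_isCompact isOpen_Ioi]
  intro K hK hKc
  rcases K.eq_empty_or_nonempty with rfl|hne
  · exact tendstoUniformlyOn_empty
  · have hl : 0 < sInf K := hK (hKc.sInf_mem hne)
    refine (tendstoUniformlyOn_dgSeq (u := sSup K) hl).mono ?_
    exact fun x hx => ⟨csInf_le hKc.bddBelow hx, le_csSup hKc.bddAbove hx⟩

lemma bound_sq {l u : ℝ} (hl : 0 < l) {x : ℝ} (hx : x ∈ Set.Icc l u) (m : ℕ) :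
    ‖1/(x+(m:ℝ))^2‖ ≤ (1/min 1 l)^2 * (1/(((m:ℝ)+1)^2)) := by
  have hxpos : 0 < x := lt_of_lt_of_le hl hx.1
  have h2 : (0:ℝ) < x+(m:ℝ) := by positivity
  have hmin : 0 < min 1 l := lt_min one_pos hl
  have hd : min 1 l * ((m:ℝ)+1) ≤ x + (m:ℝ) := le_trans (min_mul_le hl m) (by linarith [hx.1])
  rw [Real.norm_eq_abs, abs_of_pos (by positivity)]
  calc 1/(x+(m:ℝ))^2 = (1/(x+(m:ℝ)))^2 := by rw [div_pow, one_pow]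
    _ ≤ (1/(min 1 l * ((m:ℝ)+1)))^2 := by
        apply pow_le_pow_left₀ (by positivity)
        exact one_div_le_one_div_of_le (by positivity) hd
    _ = (1/min 1 l)^2 * (1/(((m:ℝ)+1)^2)) := by
        have hm1 : ((m:ℝ)+1) ≠ 0 := by positivity
        have hmin' : min 1 l ≠ 0 := ne_of_gt hmin
        field_simp

noncomputable def T (x : ℝ) : ℝ := ∑' m : ℕ, 1/(x+(m:ℝ))^2

lemma summable_T {x : ℝ} (hx : 0 < x) : Summable (fun m : ℕ => 1/(x+(m:ℝ))^2) := by
  have := summable_shift_sq hx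
  exact this.congr (fun m => by rw [add_comm])

lemma tlu_tgSeq : TendstoLocallyUniformlyOn tgSeq T atTop (Set.Ioi (0:ℝ)) := by
  rw [tendstoLocallyUniformlyOn_iff_forall_isCompact isOpen_Ioi]
  intro K hK hKc
  rcases K.eq_empty_or_nonempty with rfl|hne
  · exact tendstoUniformlyOn_empty
  · have hl : 0 < sInf K := hK (hKc.sInf_mem hne)
    have h1 : TendstoUniformlyOn (fun (n:ℕ) (x:ℝ) => ∑ m ∈ Finset.range n, 1/(x+(m:ℝ))^2) T
        atTop (Set.Icc (sInf K) (sSup K)) := by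
      apply tendstoUniformlyOn_tsum_nat (summable_sq.mul_left ((1/min 1 (sInf K))^2))
      intro m x hx
      exact bound_sq hl hx m
    have h2 := tendstoUniformlyOn_shift h1
    refine h2.mono (fun x hx => ⟨csInf_le hKc.bddBelow hx, le_csSup hKc.bddAbove hx⟩)

lemma hasDerivAt_log_Gamma {x : ℝ} (hx : 0 < x) :
    HasDerivAt (fun y => Real.log (Real.Gamma y)) (psiAux x) x := by
  apply hasDerivAt_of_tendstoLocallyUniformlyOn isOpen_Ioi tlu_dgSeq
    (Filter.Eventually.of_forall (fun n y hy => hasDerivAt_logGammaSeq hy n))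
    (fun y hy => Real.BohrMollerup.tendsto_log_gamma hy) hx

lemma digamma_eq {x : ℝ} (hx : 0 < x) : digamma x = psiAux x :=
  (hasDerivAt_log_Gamma hx).deriv

lemma hasDerivAt_psiAux {x : ℝ} (hx : 0 < x) : HasDerivAt psiAux (T x) x := by
  apply hasDerivAt_of_tendstoLocallyUniformlyOn isOpen_Ioi tlu_tgSeq
    (Filter.Eventually.of_forall (fun n y hy => hasDerivAt_dgSeq hy n))
    (fun y hy => tlu_dgSeq.tendsto_at hy) hx

lemma trigamma_eq {x : ℝ} (hx : 0 < x) : trigamma x = T x := by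
  have heq : digamma =ᶠ[𝓝 x] psiAux :=
    Filter.eventually_of_mem (isOpen_Ioi.mem_nhds hx) (fun y hy => digamma_eq hy)
  rw [trigamma, heq.deriv_eq]
  exact (hasDerivAt_psiAux hx).deriv

lemma trigamma_hasSum {x : ℝ} (hx : 0 < x) :
    HasSum (fun m : ℕ => 1/(x+(m:ℝ))^2) (trigamma x) := by
  rw [trigamma_eq hx]
  exact (summable_T hx).hasSum

lemma digamma_sub_hasSum {a b : ℝ} (ha : 0 < a) (hb : 0 < b) :
    HasSum (fun m : ℕ => 1/(b+(m:ℝ)) - 1/(a+(m:ℝ))) (digamma a - digamma b) := by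
  rw [digamma_eq ha, digamma_eq hb]
  have h := ((summable_t ha).hasSum).sub ((summable_t hb).hasSum)
  have heq : (fun m : ℕ => t m a - t m b) = (fun m : ℕ => 1/(b+(m:ℝ)) - 1/(a+(m:ℝ))) := by
    funext m; simp only [t]; ring
  rw [heq] at h
  have : psiAux a - psiAux b = (∑' m, t m a) - (∑' m, t m b) := by
    simp only [psiAux]; ring
  rw [this]
  exact h

lemma part1 {a b : ℝ} (ha : 0 < a) (hb : 0 < b) (hab : a ≠ b) :
    HasSum (fun k : ℕ => 1 / ((((k : ℝ) + a) ^ 2) * (((k : ℝ) + b) ^ 2)))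
        ((1 / (a - b) ^ 2) *
          (trigamma a + trigamma b - (2 / (a - b)) * (digamma a - digamma b))) := by
  have h1 := trigamma_hasSum ha
  have h2 := trigamma_hasSum hb
  have h3 := digamma_sub_hasSum ha hb
  have H := (((h1.add h2).sub (h3.mul_left (2/(a-b)))).mul_left (1/(a-b)^2))
  have heq : (fun k : ℕ => (1/(a-b)^2) * ((1/(a+(k:ℝ))^2 + 1/(b+(k:ℝ))^2)
      - (2/(a-b)) * (1/(b+(k:ℝ)) - 1/(a+(k:ℝ)))))
      = (fun k : ℕ => 1 / ((((k : ℝ) + a) ^ 2) * (((k : ℝ) + b) ^ 2))) := by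
    funext k
    have hka : (a+(k:ℝ)) ≠ 0 := by positivity
    have hkb : (b+(k:ℝ)) ≠ 0 := by positivity
    have hab' : a - b ≠ 0 := sub_ne_zero.2 hab
    have hka' : ((k:ℝ)+a) = (a+(k:ℝ)) := by ring
    have hkb' : ((k:ℝ)+b) = (b+(k:ℝ)) := by ring
    rw [hka', hkb']
    field_simp
    ring
  rw [heq] at H
  exact H

open MeasureTheory ProbabilityTheory in
lemma expPDFReal_eq (x : ℝ) :
    exponentialPDFReal 1 x = if 0 ≤ x then rexp (-x) else 0 := by
  simp [exponentialPDFReal, gammaPDFReal]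

open MeasureTheory ProbabilityTheory in
lemma expMeasure_eq_withDensity :
    expMeasure 1 = volume.withDensity
      (fun x => ((Real.toNNReal (exponentialPDFReal 1 x) : ℝ≥0) : ℝ≥0∞)) := rfl

open MeasureTheory ProbabilityTheory in
lemma integral_expMeasure {f : ℝ → ℝ} (hm : Measurable f) :
    ∫ x, f x ∂(expMeasure 1) = ∫ x in Set.Ioi (0:ℝ), rexp (-x) * f x := by
  rw [expMeasure_eq_withDensity,
    integral_withDensity_eq_integral_smul (measurable_exponentialPDFReal 1).real_toNNReal f]
  rw [← integral_indicator measurableSet_Ioi]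
  apply integral_congr_ae
  have h0 : ∀ᵐ x : ℝ, x ≠ 0 := by
    rw [ae_iff]
    simpa using Real.volume_singleton
  filter_upwards [h0] with x hx
  rcases lt_trichotomy x 0 with h|h|h
  · simp [Set.indicator, expPDFReal_eq, not_le.2 h, h.not_ge, NNReal.smul_def,
      Real.coe_toNNReal', Set.mem_Ioi, not_lt.2 h.le]
  · exact absurd h hx
  · simp [Set.indicator, expPDFReal_eq, h.le, Set.mem_Ioi, h, NNReal.smul_def,
      Real.coe_toNNReal', max_eq_left (Real.exp_nonneg _)]

open MeasureTheory ProbabilityTheory in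
lemma integrable_expMeasure {f : ℝ → ℝ} (hm : Measurable f)
    (hi : IntegrableOn (fun x => rexp (-x) * f x) (Set.Ioi (0:ℝ))) :
    Integrable f (expMeasure 1) := by
  rw [expMeasure_eq_withDensity]
  rw [integrable_withDensity_iff (by exact ((measurable_exponentialPDFReal 1).real_toNNReal).coe_nnreal_ennreal)
    (Filter.Eventually.of_forall (fun x => ENNReal.coe_lt_top))]
  apply (hi.integrable_indicator measurableSet_Ioi).congr
  have h0 : ∀ᵐ x : ℝ, x ≠ 0 := by
    rw [ae_iff]
    simpa using Real.volume_singleton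
  filter_upwards [h0] with x hx
  rcases lt_trichotomy x 0 with h|h|h
  · simp [Set.indicator, expPDFReal_eq, not_le.2 h, Set.mem_Ioi, not_lt.2 h.le]
  · exact absurd h hx
  · simp [Set.indicator, expPDFReal_eq, h.le, Set.mem_Ioi, h,
      max_eq_left (Real.exp_nonneg _)]
    ring

lemma integral_exp_id : ∫ x in Set.Ioi (0:ℝ), rexp (-x) * x = 1 := by
  have h : ∫ x in Set.Ioi (0:ℝ), rexp (-x) * x
      = ∫ x in Set.Ioi (0:ℝ), rexp (-x) * x ^ ((2:ℝ)-1) :=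
    setIntegral_congr_fun measurableSet_Ioi (fun x hx => by
      rw [show (2:ℝ)-1 = 1 by norm_num, Real.rpow_one])
  rw [h, ← Real.Gamma_eq_integral (by norm_num : (0:ℝ) < 2), Real.Gamma_two]

lemma integral_exp_sq : ∫ x in Set.Ioi (0:ℝ), rexp (-x) * x ^ 2 = 2 := by
  have h : ∫ x in Set.Ioi (0:ℝ), rexp (-x) * x ^ 2
      = ∫ x in Set.Ioi (0:ℝ), rexp (-x) * x ^ ((3:ℝ)-1) :=
    setIntegral_congr_fun measurableSet_Ioi (fun x hx => by
      rw [show (3:ℝ)-1 = ((2:ℕ):ℝ) by norm_num, Real.rpow_natCast])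
  rw [h, ← Real.Gamma_eq_integral (by norm_num : (0:ℝ) < 3)]
  have := Real.Gamma_nat_eq_factorial 2
  norm_num at this
  convert this using 2
  norm_num

lemma intOn_exp_id : IntegrableOn (fun x => rexp (-x) * x) (Set.Ioi (0:ℝ)) :=
  (Real.GammaIntegral_convergent (by norm_num : (0:ℝ) < 2)).congr_fun
    (fun x hx => by beta_reduce; rw [show (2:ℝ)-1 = 1 by norm_num, Real.rpow_one]) measurableSet_Ioi

lemma intOn_exp_sq : IntegrableOn (fun x => rexp (-x) * x ^ 2) (Set.Ioi (0:ℝ)) :=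
  (Real.GammaIntegral_convergent (by norm_num : (0:ℝ) < 3)).congr_fun
    (fun x hx => by beta_reduce; rw [show (3:ℝ)-1 = ((2:ℕ):ℝ) by norm_num, Real.rpow_natCast])
    measurableSet_Ioi

section Prob

variable {Ω : Type*} [MeasureSpace Ω] [IsProbabilityMeasure (ℙ : Measure Ω)]
  {X : Ω → ℝ} (hm : Measurable X) (hX : Measure.map X ℙ = expMeasure 1)
include hm hX

lemma eps_int : Integrable X ℙ := by
  have hI : Integrable (fun x : ℝ => x) (expMeasure 1) :=
    integrable_expMeasure measurable_id intOn_exp_id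
  have := (integrable_map_measure aestronglyMeasurable_id hm.aemeasurable).mp
    (by rw [hX]; exact hI)
  exact this

lemma eps_mean : ∫ ω, X ω ∂ℙ = 1 := by
  have h := integral_map (μ := ℙ) (φ := X) (f := fun x : ℝ => x) hm.aemeasurable
    aestronglyMeasurable_id
  rw [hX, integral_expMeasure (f := fun x : ℝ => x) measurable_id', integral_exp_id] at h
  exact h.symm

lemma eps_int_sq : Integrable (fun ω => X ω ^ 2) ℙ := by
  have hI : Integrable (fun x : ℝ => x ^ 2) (expMeasure 1) :=
    integrable_expMeasure (measurable_id.pow_const 2) intOn_exp_sq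
  have h2 : AEStronglyMeasurable (fun x : ℝ => x ^ 2) (Measure.map X ℙ) :=
    (measurable_id.pow_const 2).aestronglyMeasurable
  have := (integrable_map_measure h2 hm.aemeasurable).mp (by rw [hX]; exact hI)
  exact this

lemma eps_mean_sq : ∫ ω, X ω ^ 2 ∂ℙ = 2 := by
  have h := integral_map (μ := ℙ) (φ := X) (f := fun x : ℝ => x ^ 2) hm.aemeasurable
    ((measurable_id.pow_const 2).aestronglyMeasurable (μ := Measure.map X ℙ))
  rw [hX, integral_expMeasure (f := fun x : ℝ => x ^ 2) (measurable_id'.pow_const 2), integral_exp_sq] at h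
  exact h.symm

lemma eps_nonneg : ∀ᵐ ω ∂ℙ, 0 ≤ X ω := by
  have h0 : (expMeasure 1) (Set.Iio 0) = 0 := by
    rw [expMeasure_eq_withDensity, withDensity_apply _ measurableSet_Iio]
    have := lintegral_exponentialPDF_of_nonpos (r := 1) (le_refl (0:ℝ))
    exact this
  have hmap : ℙ (X ⁻¹' Set.Iio 0) = 0 := by
    rw [← Measure.map_apply hm measurableSet_Iio, hX, h0]
  rw [ae_iff]
  convert hmap using 2
  ext ω
  simp [not_le]

lemma eps_centered_sq_mean : ∫ ω, (X ω - 1) ^ 2 ∂ℙ = 1 := by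
  have h1 : (fun ω => (X ω - 1)^2) = fun ω => X ω ^2 - 2 * X ω + 1 := by
    funext ω; ring
  rw [h1]
  have hi2 : Integrable (fun ω => 2 * X ω) ℙ := by exact (eps_int hm hX).const_mul 2
  have hi1 : Integrable (fun ω => X ω ^ 2 - 2 * X ω) ℙ := by
    exact (eps_int_sq hm hX).sub hi2
  rw [integral_add hi1 (integrable_const 1), integral_sub (eps_int_sq hm hX) hi2,
    MeasureTheory.integral_const_mul, eps_mean hm hX, eps_mean_sq hm hX]
  simp

lemma eps_centered_sq_int : Integrable (fun ω => (X ω - 1) ^ 2) ℙ := by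
  have h1 : (fun ω => (X ω - 1)^2) = fun ω => X ω ^2 - 2 * X ω + 1 := by
    funext ω; ring
  rw [h1]
  exact ((eps_int_sq hm hX).sub ((eps_int hm hX).const_mul 2)).add (integrable_const 1)

end Prob

end PolyaAux

set_option maxHeartbeats 1000000 in
open PolyaAux in
/-- The series `Σ_k 1/((k+a)²(k+b)²)` converges to
`(1/(a-b)²)[ψ'(a) + ψ'(b) - (2/(a-b))(ψ(a) - ψ(b))]`, and consequently the Pólya distribution
with parameters `(a,b)`, the law of `Σ_k 2ε_k/((k+a)(k+b))` for independent standard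
exponentials `ε_k`, has variance `(4/(a-b)²)[ψ'(a) + ψ'(b) - (2/(a-b))(ψ(a) - ψ(b))]`
(the variance formula of Proposition S.1 in the paper). -/
theorem polya_variance {Ω : Type*} [MeasureSpace Ω] [IsProbabilityMeasure (ℙ : Measure Ω)]
    (a b : ℝ) (ha : 0 < a) (hb : 0 < b) (hab : a ≠ b)
    (ε : ℕ → Ω → ℝ) (hmeas : ∀ k, Measurable (ε k))
    (hindep : iIndepFun ε ℙ)
    (hexp : ∀ k, Measure.map (ε k) ℙ = expMeasure 1) :
    HasSum (fun k : ℕ => 1 / ((((k : ℝ) + a) ^ 2) * (((k : ℝ) + b) ^ 2)))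
        ((1 / (a - b) ^ 2) *
          (trigamma a + trigamma b - (2 / (a - b)) * (digamma a - digamma b))) ∧
      ∫ ω, (∑' k : ℕ, 2 * ε k ω / (((k : ℝ) + a) * ((k : ℝ) + b)) -
            ∫ ω', (∑' k : ℕ, 2 * ε k ω' / (((k : ℝ) + a) * ((k : ℝ) + b))) ∂ℙ) ^ 2 ∂ℙ =
        (4 / (a - b) ^ 2) *
          (trigamma a + trigamma b - (2 / (a - b)) * (digamma a - digamma b)) := by
  refine ⟨part1 ha hb hab, ?_⟩
  set c : ℕ → ℝ := fun k => 2 / (((k:ℝ) + a) * ((k:ℝ) + b)) with hcdef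
  have hcpos : ∀ k, 0 < c k := fun k => by
    simp only [hcdef]
    positivity
  have hcsum : Summable c := by
    refine Summable.of_nonneg_of_le (fun k => (hcpos k).le) (fun k => ?_)
      (summable_sq.mul_left (2 / (min 1 a * min 1 b)))
    have hka := min_mul_le ha k
    have hkb := min_mul_le hb k
    have hma : 0 < min 1 a := lt_min one_pos ha
    have hmb : 0 < min 1 b := lt_min one_pos hb
    calc c k = 2 / (((k:ℝ) + a) * ((k:ℝ) + b)) := rfl
      _ ≤ 2 / ((min 1 a * ((k:ℝ)+1)) * (min 1 b * ((k:ℝ)+1))) := by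
          apply div_le_div₀ (by norm_num) le_rfl (by positivity)
          exact mul_le_mul hka hkb (by positivity) (by positivity)
      _ = (2 / (min 1 a * min 1 b)) * (1/(((k:ℝ)+1)^2)) := by
          have h1 : ((k:ℝ)+1) ≠ 0 := by positivity
          field_simp
  have hi : ∀ k, Integrable (ε k) ℙ := fun k => eps_int (hmeas k) (hexp k)
  have hnn : ∀ᵐ ω ∂ℙ, ∀ k, 0 ≤ ε k ω := ae_all_iff.2 (fun k => eps_nonneg (hmeas k) (hexp k))
  -- rewrite the summands
  have hSrw : ∀ ω, (∑' k : ℕ, 2 * ε k ω / (((k:ℝ) + a) * ((k:ℝ) + b))) = ∑' k, c k * ε k ω :=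
    fun ω => tsum_congr (fun k => by simp only [hcdef]; ring)
  simp only [hSrw]
  -- lintegral of each summand
  have hcm : ∀ k, Measurable (fun ω => c k * ε k ω) := fun k => (hmeas k).const_mul (c k)
  have hcint : ∀ k, Integrable (fun ω => c k * ε k ω) ℙ := fun k => (hi k).const_mul (c k)
  have hlin : ∀ k, ∫⁻ ω, ‖c k * ε k ω‖₊ ∂ℙ = ENNReal.ofReal (c k) := by
    intro k
    simp only [← enorm_eq_nnnorm]
    rw [← ofReal_integral_norm_eq_lintegral_enorm (hcint k)]
    congr 1
    have hae : ∀ᵐ ω ∂ℙ, ‖c k * ε k ω‖ = c k * ε k ω := by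
      filter_upwards [eps_nonneg (hmeas k) (hexp k)] with ω hω
      rw [Real.norm_eq_abs, abs_of_nonneg (mul_nonneg (hcpos k).le hω)]
    rw [integral_congr_ae hae, MeasureTheory.integral_const_mul,
      eps_mean (hmeas k) (hexp k), mul_one]
  have hlinsum : (∑' k, ∫⁻ ω, ‖c k * ε k ω‖₊ ∂ℙ) ≠ ⊤ := by
    simp only [hlin]
    rw [← ENNReal.ofReal_tsum_of_nonneg (fun k => (hcpos k).le) hcsum]
    exact ENNReal.ofReal_ne_top
  -- the mean of S
  have hM : ∫ ω, (∑' k, c k * ε k ω) ∂ℙ = ∑' k, c k := by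
    rw [integral_tsum (fun k => (hcm k).aestronglyMeasurable) hlinsum]
    exact tsum_congr (fun k => by
      rw [MeasureTheory.integral_const_mul, eps_mean (hmeas k) (hexp k), mul_one])
  rw [hM]
  -- a.e. summability
  have h_ae_sum : ∀ᵐ ω ∂ℙ, Summable (fun k => c k * ε k ω) := by
    have hmeas2 : ∀ k, AEMeasurable (fun ω => (‖c k * ε k ω‖₊ : ℝ≥0∞)) ℙ :=
      fun k => ((hcm k).nnnorm.coe_nnreal_ennreal).aemeasurable
    have h1 : ∫⁻ ω, (∑' k, (‖c k * ε k ω‖₊ : ℝ≥0∞)) ∂ℙ ≠ ⊤ := by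
      rw [lintegral_tsum hmeas2]; exact hlinsum
    filter_upwards [ae_lt_top' (AEMeasurable.ennreal_tsum hmeas2) h1] with ω hω
    exact Summable.of_nnnorm (ENNReal.tsum_coe_ne_top_iff_summable.1 hω.ne)
  -- centered variables
  set Y : ℕ → Ω → ℝ := fun k ω => c k * (ε k ω - 1) with hYdef
  have hYmeas : ∀ k, Measurable (Y k) := fun k => ((hmeas k).sub_const 1).const_mul _
  have hYint : ∀ k, Integrable (Y k) ℙ := fun k =>
    ((hi k).sub (integrable_const 1)).const_mul (c k)
  have hYmean : ∀ k, ∫ ω, Y k ω ∂ℙ = 0 := by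
    intro k
    simp only [hYdef]
    rw [MeasureTheory.integral_const_mul,
      integral_sub (hi k) (integrable_const 1), eps_mean (hmeas k) (hexp k)]
    simp
  have hYsq : ∀ k, ∫ ω, Y k ω * Y k ω ∂ℙ = c k ^ 2 := by
    intro k
    have h1 : (fun ω => Y k ω * Y k ω) = fun ω => c k ^ 2 * (ε k ω - 1)^2 := by
      funext ω; simp only [hYdef]; ring
    rw [h1, MeasureTheory.integral_const_mul, eps_centered_sq_mean (hmeas k) (hexp k), mul_one]
  have hYsqint : ∀ k, Integrable (fun ω => Y k ω * Y k ω) ℙ := by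
    intro k
    have h1 : (fun ω => Y k ω * Y k ω) = fun ω => c k ^ 2 * (ε k ω - 1)^2 := by
      funext ω; simp only [hYdef]; ring
    rw [h1]
    exact (eps_centered_sq_int (hmeas k) (hexp k)).const_mul _
  have hYindep : ∀ p q, p ≠ q → IndepFun (Y p) (Y q) ℙ := by
    intro p q hpq
    have h := (hindep.indepFun hpq).comp (φ := fun x => c p * (x - 1))
      (ψ := fun x => c q * (x - 1)) ((measurable_id.sub_const 1).const_mul _)
      ((measurable_id.sub_const 1).const_mul _)
    exact h
  have hprodint : ∀ p q, p ≠ q → Integrable (fun ω => Y p ω * Y q ω) ℙ := by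
    intro p q hpq
    have := (hYindep p q hpq).integrable_mul (hYint p) (hYint q)
    exact this
  have hprodzero : ∀ p q, p ≠ q → ∫ ω, Y p ω * Y q ω ∂ℙ = 0 := by
    intro p q hpq
    have h2 : ∫ ω, Y p ω * Y q ω ∂ℙ = (∫ ω, Y p ω ∂ℙ) * ∫ ω, Y q ω ∂ℙ :=
      (hYindep p q hpq).integral_fun_mul_eq_mul_integral (hYint p).1 (hYint q).1
    rw [h2, hYmean p, zero_mul]
  have hYYint : ∀ p : ℕ × ℕ, Integrable (fun ω => Y p.1 ω * Y p.2 ω) ℙ := by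
    intro p
    by_cases hpq : p.1 = p.2
    · rw [hpq]; exact hYsqint p.2
    · exact hprodint p.1 p.2 hpq
  -- bound for double sum
  have hbnd : ∀ p q : ℕ, ∫ ω, ‖Y p ω * Y q ω‖ ∂ℙ ≤ 9 * (c p * c q) := by
    intro p q
    by_cases hpq : p = q
    · subst hpq
      have h1 : ∀ ω, ‖Y p ω * Y p ω‖ = Y p ω * Y p ω :=
        fun ω => by rw [Real.norm_eq_abs, abs_of_nonneg (mul_self_nonneg _)]
      calc ∫ ω, ‖Y p ω * Y p ω‖ ∂ℙ = ∫ ω, Y p ω * Y p ω ∂ℙ := by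
            exact integral_congr_ae (Filter.Eventually.of_forall h1)
        _ = c p ^ 2 := hYsq p
        _ ≤ 9 * (c p * c p) := by nlinarith [hcpos p]
    · have hplus : ∀ k, Integrable (fun ω => ε k ω + 1) ℙ := fun k => (hi k).add (integrable_const 1)
      have hplusmean : ∀ k, ∫ ω, (ε k ω + 1) ∂ℙ = 2 := by
        intro k
        rw [integral_add (hi k) (integrable_const 1), eps_mean (hmeas k) (hexp k)]
        norm_num
      have hindpq : IndepFun (fun ω => ε p ω + 1) (fun ω => ε q ω + 1) ℙ := by
        have h := (hindep.indepFun hpq).comp (φ := fun x : ℝ => x + 1)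
          (ψ := fun x : ℝ => x + 1) (measurable_id.add_const 1) (measurable_id.add_const 1)
        exact h
      have hprod2 : Integrable (fun ω => (ε p ω + 1) * (ε q ω + 1)) ℙ := by
        have := hindpq.integrable_mul (hplus p) (hplus q)
        exact this
      have hle : ∀ᵐ ω ∂ℙ, ‖Y p ω * Y q ω‖ ≤ (c p * c q) * ((ε p ω + 1) * (ε q ω + 1)) := by
        filter_upwards [hnn] with ω hω
        have h1 : |ε p ω - 1| ≤ ε p ω + 1 := abs_le.2 ⟨by linarith [hω p], by linarith⟩
        have h2 : |ε q ω - 1| ≤ ε q ω + 1 := abs_le.2 ⟨by linarith [hω q], by linarith⟩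
        simp only [hYdef]
        rw [Real.norm_eq_abs, abs_mul, abs_mul, abs_mul,
          abs_of_nonneg (hcpos p).le, abs_of_nonneg (hcpos q).le]
        calc c p * |ε p ω - 1| * (c q * |ε q ω - 1|)
            = (c p * c q) * (|ε p ω - 1| * |ε q ω - 1|) := by ring
          _ ≤ (c p * c q) * ((ε p ω + 1) * (ε q ω + 1)) := by
              apply mul_le_mul_of_nonneg_left _ (by positivity)
              exact mul_le_mul h1 h2 (abs_nonneg _) (by linarith [hω p])
      calc ∫ ω, ‖Y p ω * Y q ω‖ ∂ℙ
          ≤ ∫ ω, (c p * c q) * ((ε p ω + 1) * (ε q ω + 1)) ∂ℙ :=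
            integral_mono_ae (hprodint p q hpq).norm (hprod2.const_mul _) hle
        _ = (c p * c q) * ((∫ ω, (ε p ω + 1) ∂ℙ) * (∫ ω, (ε q ω + 1) ∂ℙ)) := by
            rw [MeasureTheory.integral_const_mul]
            congr 1
            exact hindpq.integral_fun_mul_eq_mul_integral (hplus p).1 (hplus q).1
        _ = (c p * c q) * 4 := by rw [hplusmean p, hplusmean q]; norm_num
        _ ≤ 9 * (c p * c q) := by nlinarith [hcpos p, hcpos q]
  have hsum9 : Summable (fun p : ℕ × ℕ => 9 * (c p.1 * c p.2)) := by
    have hcn : Summable (fun k => ‖c k‖) := summable_norm_iff.2 hcsum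
    exact (summable_mul_of_summable_norm hcn hcn).mul_left 9
  have hlin2sum : (∑' p : ℕ × ℕ, ∫⁻ ω, ‖Y p.1 ω * Y p.2 ω‖₊ ∂ℙ) ≠ ⊤ := by
    have heach : ∀ p : ℕ × ℕ, ∫⁻ ω, ‖Y p.1 ω * Y p.2 ω‖₊ ∂ℙ
        ≤ ENNReal.ofReal (9 * (c p.1 * c p.2)) := by
      intro p
      simp only [← enorm_eq_nnnorm]
      rw [← ofReal_integral_norm_eq_lintegral_enorm (hYYint p)]
      exact ENNReal.ofReal_le_ofReal (hbnd p.1 p.2)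
    refine ne_top_of_le_ne_top ?_ (ENNReal.tsum_le_tsum heach)
    rw [← ENNReal.ofReal_tsum_of_nonneg
      (fun p => by positivity) hsum9]
    exact ENNReal.ofReal_ne_top
  -- main identification
  have hmain : ∫ ω, ((∑' k, c k * ε k ω) - ∑' k, c k)^2 ∂ℙ
      = ∑' p : ℕ × ℕ, ∫ ω, Y p.1 ω * Y p.2 ω ∂ℙ := by
    have hint_eq : ∫ ω, (∑' p : ℕ × ℕ, Y p.1 ω * Y p.2 ω) ∂ℙ
        = ∑' p : ℕ × ℕ, ∫ ω, Y p.1 ω * Y p.2 ω ∂ℙ :=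
      integral_tsum (fun p => ((hYmeas p.1).mul (hYmeas p.2)).aestronglyMeasurable) hlin2sum
    refine Eq.trans (integral_congr_ae ?_) hint_eq
    filter_upwards [h_ae_sum, hnn] with ω hω hωn
    have h1 : (∑' k, c k * ε k ω) - ∑' k, c k = ∑' k, Y k ω := by
      rw [← Summable.tsum_sub hω hcsum]
      exact tsum_congr (fun k => by simp only [hYdef]; ring)
    have hYnorm : Summable (fun k => ‖Y k ω‖) := by
      refine Summable.of_nonneg_of_le (fun k => norm_nonneg _) (fun k => ?_) (hω.add hcsum)
      simp only [hYdef]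
      rw [Real.norm_eq_abs, abs_mul, abs_of_nonneg (hcpos k).le]
      have h2 : |ε k ω - 1| ≤ ε k ω + 1 := abs_le.2 ⟨by linarith [hωn k], by linarith⟩
      calc c k * |ε k ω - 1| ≤ c k * (ε k ω + 1) :=
            mul_le_mul_of_nonneg_left h2 (hcpos k).le
        _ = c k * ε k ω + c k := by ring
    rw [h1, pow_two]
    exact tsum_mul_tsum_of_summable_norm hYnorm hYnorm
  rw [hmain]
  -- reduce double sum to diagonal
  have hinj : Function.Injective (fun j : ℕ => ((j, j) : ℕ × ℕ)) := by
    intro x y h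
    exact (Prod.ext_iff.1 h).1
  have hdiag : (∑' p : ℕ × ℕ, ∫ ω, Y p.1 ω * Y p.2 ω ∂ℙ) = ∑' k, c k ^ 2 := by
    rw [← Function.Injective.tsum_eq hinj (f := fun p : ℕ × ℕ => ∫ ω, Y p.1 ω * Y p.2 ω ∂ℙ)]
    · exact tsum_congr (fun j => hYsq j)
    · intro p hp
      by_cases h : p.1 = p.2
      · exact ⟨p.1, by rw [Prod.ext_iff]; exact ⟨rfl, h⟩⟩
      · exact absurd (hprodzero p.1 p.2 h) hp
  rw [hdiag]
  -- conclude with part 1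
  have hc2 : ∀ k, c k ^ 2 = 4 * (1 / ((((k:ℝ) + a) ^ 2) * (((k:ℝ) + b) ^ 2))) := by
    intro k
    have h1 : ((k:ℝ) + a) ≠ 0 := by positivity
    have h2 : ((k:ℝ) + b) ≠ 0 := by positivity
    simp only [hcdef]
    field_simp
    ring
  calc (∑' k, c k ^ 2)
      = ∑' k : ℕ, 4 * (1 / ((((k:ℝ) + a) ^ 2) * (((k:ℝ) + b) ^ 2))) := tsum_congr hc2
    _ = 4 * ∑' k : ℕ, 1 / ((((k:ℝ) + a) ^ 2) * (((k:ℝ) + b) ^ 2)) := tsum_mul_left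
    _ = 4 * ((1 / (a - b) ^ 2) *
          (trigamma a + trigamma b - (2 / (a - b)) * (digamma a - digamma b))) := by
        rw [(part1 ha hb hab).tsum_eq]
    _ = (4 / (a - b) ^ 2) *
          (trigamma a + trigamma b - (2 / (a - b)) * (digamma a - digamma b)) := by
        ring
end

section
/- Let a, b > 0 with a ≠ b. Then 0 < (ψ(a) − ψ(b))/(a − b) < (ψ'(a) + ψ'(b))/2. Equivalently, 0 < 2(ψ(a) − ψ(b)) / [(a − b)(ψ'(a) + ψ'(b))] < 1, so the correlation lower bound 1 − 4(ψ(a) − ψ(b))/[(a − b)(ψ'(a) + ψ'(b))] of the bivariate logistic-beta distribution lies in the interval (−1, 1). -/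
open Real Filter Topology Set

local notation "γ" => Real.eulerMascheroniConstant

lemma summable_base : Summable (fun k : ℕ => 1 / ((k : ℝ) + 1) ^ 2) := by
  have h := (summable_nat_add_iff 1).mpr (Real.summable_one_div_nat_pow.mpr one_lt_two)
  refine h.congr fun k => ?_
  push_cast
  ring

lemma summable_inv_sq_add {c : ℝ} (hc : 0 < c) :
    Summable (fun k : ℕ => 1 / ((k : ℝ) + c) ^ 2) := by
  refine Summable.of_nonneg_of_le (fun k => by positivity)
    (fun k => ?_) (summable_base.mul_left (((1 + c) / c) ^ 2))
  have hk : (0 : ℝ) ≤ k := Nat.cast_nonneg k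
  rw [mul_one_div, div_le_div_iff₀ (by positivity) (by positivity), div_pow,
    div_mul_eq_mul_div, le_div_iff₀ (by positivity)]
  nlinarith [sq_nonneg ((k : ℝ) * c), sq_nonneg (k : ℝ), sq_nonneg c, mul_nonneg hk hc.le]

noncomputable def fTerm (k : ℕ) (y : ℝ) : ℝ := y / (k + 1) - Real.log (1 + y / (k + 1))

noncomputable def gTerm (k : ℕ) (y : ℝ) : ℝ := y / ((k + 1) * (y + k + 1))

lemma fTerm_nonneg (k : ℕ) {y : ℝ} (hy : 0 < y) : 0 ≤ fTerm k y := by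
  have h1 : (0:ℝ) < y / (k + 1) := by positivity
  have := Real.log_le_sub_one_of_pos (show (0:ℝ) < 1 + y / (k+1) by linarith)
  simp only [fTerm]; linarith

lemma fTerm_le (k : ℕ) {y : ℝ} (hy : 0 < y) : fTerm k y ≤ y ^ 2 * (1 / ((k:ℝ) + 1) ^ 2) := by
  set u : ℝ := y / (k + 1) with hu
  have hu0 : 0 < u := by positivity
  have h1 : 1 - (1 + u)⁻¹ ≤ Real.log (1 + u) :=
    Real.one_sub_inv_le_log_of_pos (by linarith)
  have h2 : u - u ^ 2 ≤ 1 - (1 + u)⁻¹ := by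
    have hinv : (1 + u)⁻¹ ≤ 1 - u + u ^ 2 := by
      rw [inv_le_iff_one_le_mul₀ (by linarith)]
      nlinarith
    linarith
  have : fTerm k y ≤ u ^ 2 := by simp only [fTerm, ← hu]; linarith
  calc fTerm k y ≤ u ^ 2 := this
    _ = y ^ 2 * (1 / ((k:ℝ) + 1) ^ 2) := by rw [hu]; field_simp

lemma summable_fTerm {x : ℝ} (hx : 0 < x) : Summable (fun k => fTerm k x) :=
  Summable.of_nonneg_of_le (fun k => fTerm_nonneg k hx) (fun k => fTerm_le k hx)
    (summable_base.mul_left _)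

lemma gTerm_nonneg (k : ℕ) {y : ℝ} (hy : 0 < y) : 0 ≤ gTerm k y := by
  have hk : (0:ℝ) ≤ (k:ℝ) := Nat.cast_nonneg k
  have : (0:ℝ) < ((k:ℝ) + 1) * (y + k + 1) := by positivity
  rw [gTerm]
  positivity

lemma gTerm_le (k : ℕ) {y c : ℝ} (hy : 0 < y) (hyc : y ≤ c) :
    gTerm k y ≤ c * (1 / ((k:ℝ) + 1) ^ 2) := by
  have hk : (0:ℝ) < (k:ℝ) + 1 := by positivity
  rw [gTerm, mul_one_div, div_le_div_iff₀ (by positivity) (by positivity)]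
  nlinarith [mul_nonneg hy.le (Nat.cast_nonneg k : (0:ℝ) ≤ k), hy.le.trans hyc]

lemma summable_gTerm {x : ℝ} (hx : 0 < x) : Summable (fun k => gTerm k x) :=
  Summable.of_nonneg_of_le (fun k => gTerm_nonneg k hx) (fun k => gTerm_le k hx le_rfl)
    (summable_base.mul_left _)

lemma gTerm_eq (k : ℕ) {y : ℝ} (hy : 0 < y) :
    gTerm k y = 1 / ((k:ℝ) + 1) - 1 / (y + k + 1) := by
  have h1 : ((k:ℝ) + 1) ≠ 0 := by positivity
  have h2 : (y + k + 1) ≠ 0 := by positivity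
  rw [gTerm]; field_simp; ring

lemma hasDerivAt_fTerm (k : ℕ) {y : ℝ} (hy : 0 < y) :
    HasDerivAt (fTerm k) (gTerm k y) y := by
  have hk : (0:ℝ) < (k:ℝ) + 1 := by positivity
  have h1 : HasDerivAt (fun z : ℝ => z / ((k:ℝ) + 1)) (1 / ((k:ℝ)+1)) y := by
    simpa using (hasDerivAt_id y).div_const ((k:ℝ) + 1)
  have h2 : HasDerivAt (fun z : ℝ => 1 + z / ((k:ℝ)+1)) (1 / ((k:ℝ)+1)) y :=
    h1.const_add 1
  have h3 : (1 : ℝ) + y / (k+1) ≠ 0 := by positivity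
  have h4 := h2.log h3
  have := h1.sub h4
  refine this.congr_deriv ?_
  rw [gTerm_eq k hy]
  congr 1
  have he : ((k:ℝ)+1) * (1 + y/((k:ℝ)+1)) = y + (k:ℝ) + 1 := by
    field_simp; ring
  rw [div_div, he]

lemma mem_Ioo_self {x : ℝ} (hx : 0 < x) : x ∈ Ioo (x/2) (x+1) :=
  ⟨half_lt_self hx, by linarith⟩

lemma hasDerivAt_fsum {x : ℝ} (hx : 0 < x) :
    HasDerivAt (fun y => ∑' k, fTerm k y) (∑' k, gTerm k x) x := by
  refine hasDerivAt_tsum_of_isPreconnected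
    (u := fun k : ℕ => (x + 1) * (1 / ((k:ℝ) + 1) ^ 2)) (summable_base.mul_left _)
    isOpen_Ioo (convex_Ioo (x/2) (x+1)).isPreconnected
    (fun k y hy => hasDerivAt_fTerm k (lt_trans (half_pos hx) hy.1))
    (fun k y hy => ?_) (mem_Ioo_self hx) (summable_fTerm hx) (mem_Ioo_self hx)
  have hy0 : 0 < y := lt_trans (half_pos hx) hy.1
  rw [Real.norm_eq_abs, abs_of_nonneg (gTerm_nonneg k hy0)]
  exact gTerm_le k hy0 hy.2.le

lemma log_factorial (n : ℕ) :
    Real.log (Nat.factorial n : ℝ) = ∑ k ∈ Finset.range n, Real.log ((k:ℝ) + 1) := by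
  induction n with
  | zero => simp
  | succ n ih =>
    rw [Finset.sum_range_succ, ← ih, Nat.factorial_succ, Nat.cast_mul,
      Real.log_mul (by positivity) (by positivity)]
    push_cast
    ring

lemma harmonic_cast (n : ℕ) :
    ((harmonic n : ℚ) : ℝ) = ∑ k ∈ Finset.range n, 1 / ((k:ℝ) + 1) := by
  rw [harmonic]
  push_cast
  simp [one_div]

lemma logGammaSeq_eq {x : ℝ} (hx : 0 < x) (n : ℕ) :
    Real.BohrMollerup.logGammaSeq x n =
      -Real.log x + (∑ k ∈ Finset.range n, fTerm k x)
        - x * (((harmonic n : ℚ) : ℝ) - Real.log n) := by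
  rw [Real.BohrMollerup.logGammaSeq, Finset.sum_range_succ', log_factorial, harmonic_cast]
  have hterm : ∀ k ∈ Finset.range n, Real.log (x + ((k + 1 : ℕ) : ℝ))
      = Real.log ((k:ℝ) + 1) + Real.log (1 + x / ((k:ℝ) + 1)) := by
    intro k _
    rw [← Real.log_mul (by positivity) (by positivity)]
    push_cast
    congr 1
    field_simp
    ring
  have hxsum : ∑ k ∈ Finset.range n, x / ((k:ℝ) + 1)
      = x * ∑ k ∈ Finset.range n, 1 / ((k:ℝ) + 1) := by
    rw [Finset.mul_sum]
    exact Finset.sum_congr rfl fun k _ => by ring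
  rw [Finset.sum_congr rfl hterm, Finset.sum_add_distrib]
  simp only [fTerm, Nat.cast_zero, add_zero]
  rw [Finset.sum_sub_distrib, hxsum]
  push_cast
  ring

local notation "S" => Real.BohrMollerup.logGammaSeq

lemma logGamma_eq {x : ℝ} (hx : 0 < x) :
    Real.log (Real.Gamma x) = -Real.log x - γ * x + ∑' k, fTerm k x := by
  have h1 := Real.BohrMollerup.tendsto_log_gamma hx
  have h2 : Tendsto (S x) atTop
      (𝓝 (-Real.log x + (∑' k, fTerm k x) - x * γ)) := by
    have hs := (summable_fTerm hx).hasSum.tendsto_sum_nat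
    have hc : Tendsto (fun _ : ℕ => -Real.log x) atTop (𝓝 (-Real.log x)) :=
      tendsto_const_nhds
    have this' := (hc.add hs).sub (Real.tendsto_harmonic_sub_log.const_mul x)
    refine this'.congr fun n => ?_
    rw [logGammaSeq_eq hx n]
  have := tendsto_nhds_unique h1 h2
  rw [this]; ring

lemma hasDerivAt_logGamma {x : ℝ} (hx : 0 < x) :
    HasDerivAt (fun y => Real.log (Real.Gamma y))
      (-γ - 1 / x + ∑' k, gTerm k x) x := by
  have h1 := (Real.hasDerivAt_log hx.ne').neg
  have h2 : HasDerivAt (fun y : ℝ => γ * y) γ x := by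
    simpa using (hasDerivAt_id x).const_mul γ
  have hR := (h1.sub h2).add (hasDerivAt_fsum hx)
  have heq : (fun y => Real.log (Real.Gamma y)) =ᶠ[𝓝 x]
      (fun y => -Real.log y - γ * y + ∑' k, fTerm k y) := by
    filter_upwards [Ioi_mem_nhds hx] with y hy
    exact logGamma_eq hy
  have h3 := hR.congr_of_eventuallyEq heq
  refine h3.congr_deriv ?_
  rw [one_div]
  ring

lemma digamma_eq {x : ℝ} (hx : 0 < x) :
    digamma x = -γ - 1 / x + ∑' k, gTerm k x :=
  (hasDerivAt_logGamma hx).deriv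

lemma hasDerivAt_gsum {x : ℝ} (hx : 0 < x) :
    HasDerivAt (fun y => ∑' k, gTerm k y) (∑' k : ℕ, 1 / (x + (k:ℝ) + 1) ^ 2) x := by
  refine hasDerivAt_tsum_of_isPreconnected (u := fun k : ℕ => 1 / ((k:ℝ) + 1) ^ 2)
    (g' := fun k y => 1 / (y + (k:ℝ) + 1) ^ 2) summable_base isOpen_Ioo (convex_Ioo (x/2) (x+1)).isPreconnected
    (fun k y hy => ?_) (fun k y hy => ?_) (mem_Ioo_self hx)
    (summable_gTerm hx) (mem_Ioo_self hx)
  · have hy0 : 0 < y := lt_trans (half_pos hx) hy.1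
    have h1 : HasDerivAt (fun z : ℝ => z + ((k:ℝ) + 1)) 1 y := (hasDerivAt_id y).add_const _
    have h2 := (h1.inv (by positivity)).const_sub (1 / ((k:ℝ) + 1))
    have heq : (fun z : ℝ => 1 / ((k:ℝ) + 1) - (z + ((k:ℝ) + 1))⁻¹) =ᶠ[𝓝 y] gTerm k := by
      filter_upwards [Ioi_mem_nhds hy0] with z hz
      rw [gTerm_eq k hz, one_div, add_assoc]
      rw [one_div]
    have h3 := h2.congr_of_eventuallyEq heq.symm
    convert h3 using 1
    rw [neg_div, neg_neg]
    simp [add_assoc]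
  · have hy0 : 0 < y := lt_trans (half_pos hx) hy.1
    have hk : (0:ℝ) < (k:ℝ) + 1 := by positivity
    rw [Real.norm_eq_abs, abs_of_nonneg (by positivity)]
    have h5 : ((k:ℝ) + 1) ^ 2 ≤ (y + (k:ℝ) + 1) ^ 2 := by nlinarith
    exact one_div_le_one_div_of_le (by positivity) h5

lemma summable_inv_sq_add' {x : ℝ} (hx : 0 < x) :
    Summable (fun k : ℕ => 1 / (x + (k:ℝ)) ^ 2) :=
  (summable_inv_sq_add hx).congr fun k => by rw [add_comm]

lemma hasDerivAt_digamma {x : ℝ} (hx : 0 < x) :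
    HasDerivAt digamma (∑' k : ℕ, 1 / (x + (k:ℝ)) ^ 2) x := by
  have h1 : HasDerivAt (fun y : ℝ => -γ - 1 / y) ((x ^ 2)⁻¹) x := by
    have := (hasDerivAt_inv hx.ne').const_sub (-γ)
    simpa [one_div] using this
  have hR := h1.add (hasDerivAt_gsum hx)
  have heq : digamma =ᶠ[𝓝 x] (fun y : ℝ => -γ - 1 / y + ∑' k, gTerm k y) := by
    filter_upwards [Ioi_mem_nhds hx] with y hy
    exact digamma_eq hy
  have h2 := hR.congr_of_eventuallyEq heq
  refine h2.congr_deriv ?_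
  rw [Summable.tsum_eq_zero_add (summable_inv_sq_add' hx)]
  congr 1
  · norm_num
  · exact tsum_congr fun k => by push_cast; ring_nf

lemma trigamma_eq {x : ℝ} (hx : 0 < x) :
    trigamma x = ∑' k : ℕ, 1 / (x + (k:ℝ)) ^ 2 :=
  (hasDerivAt_digamma hx).deriv

lemma amgm_le {u v : ℝ} (hu : 0 < u) (hv : 0 < v) :
    1 / (u * v) ≤ (1 / u ^ 2 + 1 / v ^ 2) / 2 := by
  have h := two_mul_le_add_sq (1 / u) (1 / v)
  have h2 : 1 / u * (1 / v) = 1 / (u * v) := by rw [div_mul_div_comm, one_mul]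
  have h3 : (1 / u) ^ 2 = 1 / u ^ 2 := by rw [div_pow, one_pow]
  have h4 : (1 / v) ^ 2 = 1 / v ^ 2 := by rw [div_pow, one_pow]
  nlinarith [h, h2, h3, h4]

lemma amgm_lt {u v : ℝ} (hu : 0 < u) (hv : 0 < v) (huv : u ≠ v) :
    1 / (u * v) < (1 / u ^ 2 + 1 / v ^ 2) / 2 := by
  have hne : 1 / u ≠ 1 / v := by
    intro h
    rw [div_eq_div_iff hu.ne' hv.ne', one_mul, one_mul] at h
    exact huv h.symm
  have h4 : 0 < (1 / u - 1 / v) ^ 2 :=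
    (sq_nonneg _).lt_of_ne (Ne.symm (pow_ne_zero 2 (sub_ne_zero.mpr hne)))
  have h2 : 1 / u * (1 / v) = 1 / (u * v) := by rw [div_mul_div_comm, one_mul]
  have h3 : (1 / u) ^ 2 = 1 / u ^ 2 := by rw [div_pow, one_pow]
  have h5 : (1 / v) ^ 2 = 1 / v ^ 2 := by rw [div_pow, one_pow]
  nlinarith [h4]

lemma summable_prod {a b : ℝ} (ha : 0 < a) (hb : 0 < b) :
    Summable (fun k : ℕ => 1 / ((a + (k:ℝ)) * (b + (k:ℝ)))) := by
  refine Summable.of_nonneg_of_le (fun k => by positivity)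
    (fun k => amgm_le (by positivity) (by positivity))
    (((summable_inv_sq_add' ha).add (summable_inv_sq_add' hb)).div_const 2)

lemma digamma_sub {a b : ℝ} (ha : 0 < a) (hb : 0 < b) :
    digamma a - digamma b = (a - b) * ∑' k : ℕ, 1 / ((a + (k:ℝ)) * (b + (k:ℝ))) := by
  rw [digamma_eq ha, digamma_eq hb]
  have h1 : (-γ - 1 / a + ∑' k, gTerm k a) - (-γ - 1 / b + ∑' k, gTerm k b)
      = (1 / b - 1 / a) + ((∑' k, gTerm k a) - ∑' k, gTerm k b) := by ring
  rw [h1, ← Summable.tsum_sub (summable_gTerm ha) (summable_gTerm hb)]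
  have h2 : ∀ k : ℕ, gTerm k a - gTerm k b
      = (a - b) * (1 / ((a + ((k:ℝ) + 1)) * (b + ((k:ℝ) + 1)))) := by
    intro k
    rw [gTerm_eq k ha, gTerm_eq k hb]
    have e1 : a + ((k:ℝ) + 1) ≠ 0 := by positivity
    have e2 : b + ((k:ℝ) + 1) ≠ 0 := by positivity
    have e3 : a + (k:ℝ) + 1 ≠ 0 := by positivity
    have e4 : b + (k:ℝ) + 1 ≠ 0 := by positivity
    rw [mul_one_div, eq_div_iff (mul_ne_zero e1 e2)]
    field_simp
    ring
  rw [tsum_congr h2, tsum_mul_left,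
    Summable.tsum_eq_zero_add (summable_prod ha hb)]
  have h3 : 1 / b - 1 / a = (a - b) * (1 / ((a + ((0:ℕ):ℝ)) * (b + ((0:ℕ):ℝ)))) := by
    push_cast
    rw [add_zero, add_zero, div_sub_div _ _ hb.ne' ha.ne', one_mul, mul_one, mul_one_div,
      mul_comm b a]
  rw [mul_add, ← h3]
  congr 2
  exact tsum_congr fun k => by push_cast; ring_nf

/-- For `a ≠ b`, `0 < (ψ(a) - ψ(b))/(a - b) < (ψ'(a) + ψ'(b))/2`; equivalently the correlation
lower bound `1 - 4(ψ(a) - ψ(b))/[(a - b)(ψ'(a) + ψ'(b))]` of the bivariate logistic-beta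
distribution lies in `(-1, 1)` (underlying Corollary 2.1 of the paper). -/
theorem digamma_trigamma_correlation_bound (a b : ℝ) (ha : 0 < a) (hb : 0 < b) (hab : a ≠ b) :
    (0 < (digamma a - digamma b) / (a - b) ∧
        (digamma a - digamma b) / (a - b) < (trigamma a + trigamma b) / 2) ∧
      (0 < 2 * (digamma a - digamma b) / ((a - b) * (trigamma a + trigamma b)) ∧
          2 * (digamma a - digamma b) / ((a - b) * (trigamma a + trigamma b)) < 1) ∧
      1 - 4 * (digamma a - digamma b) / ((a - b) * (trigamma a + trigamma b)) ∈
        Set.Ioo (-1 : ℝ) 1 := by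
  have hab' : a - b ≠ 0 := sub_ne_zero.mpr hab
  set P : ℝ := ∑' k : ℕ, 1 / ((a + (k:ℝ)) * (b + (k:ℝ))) with hPdef
  have hsumP := summable_prod ha hb
  have hsumT := (((summable_inv_sq_add' ha).add (summable_inv_sq_add' hb)).div_const 2)
  have hP : 0 < P := by
    refine Summable.tsum_pos hsumP (fun k => by positivity) 0 (by positivity)
  have htri : (trigamma a + trigamma b) / 2
      = ∑' k : ℕ, (1 / (a + (k:ℝ)) ^ 2 + 1 / (b + (k:ℝ)) ^ 2) / 2 := by
    rw [trigamma_eq ha, trigamma_eq hb,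
      ← Summable.tsum_add (summable_inv_sq_add' ha) (summable_inv_sq_add' hb), tsum_div_const]
  have hPlt : P < ∑' k : ℕ, (1 / (a + (k:ℝ)) ^ 2 + 1 / (b + (k:ℝ)) ^ 2) / 2 := by
    refine Summable.tsum_lt_tsum_of_nonneg (i := 0) (fun k => by positivity)
      (fun k => amgm_le (by positivity) (by positivity)) ?_ hsumT
    have h0 : a + ((0:ℕ):ℝ) ≠ b + ((0:ℕ):ℝ) := by push_cast; simpa using hab
    exact amgm_lt (by positivity) (by positivity) h0
  have hPT : P < (trigamma a + trigamma b) / 2 := htri ▸ hPlt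
  have hT : 0 < trigamma a + trigamma b := by linarith
  have hdiff : digamma a - digamma b = (a - b) * P := digamma_sub ha hb
  have hslope : (digamma a - digamma b) / (a - b) = P := by
    rw [hdiff, mul_div_cancel_left₀ _ hab']
  have key : ∀ c : ℝ, c * (digamma a - digamma b) / ((a - b) * (trigamma a + trigamma b))
      = c * P / (trigamma a + trigamma b) := by
    intro c
    rw [hdiff, show c * ((a - b) * P) = (a - b) * (c * P) by ring,
      mul_div_mul_left _ _ hab']
  have h2P : 2 * P / (trigamma a + trigamma b) < 1 := by
    rw [div_lt_one hT]; linarith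
  have h4P : 4 * P / (trigamma a + trigamma b) < 2 := by
    rw [div_lt_iff₀ hT]; linarith
  have h2pos : 0 < 2 * P / (trigamma a + trigamma b) := by positivity
  have h4pos : 0 < 4 * P / (trigamma a + trigamma b) := by positivity
  refine ⟨⟨by rw [hslope]; exact hP, by rw [hslope]; exact hPT⟩,
    ⟨by rw [key 2]; exact h2pos, by rw [key 2]; exact h2P⟩, ?_⟩
  rw [key 4]
  constructor
  · linarith
  · linarith
end
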